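/- Let α ∈ (0,1] and let p ∈ H_α[0,1] take values in [0,1], with q = 1−p, and assume p(0) < 1 and q(1) < 1. Let ν_p be the probability measure on [0,1] with density f_p(x) = (1/C_p) exp(∫_x^{1/2} p(t)/t dt + ∫_{1/2}^x q(t)/(1−t) dt) with respect to Lebesgue measure, where C_p = ∫₀¹ exp(∫_x^{1/2} p(t)/t dt + ∫_{1/2}^x q(t)/(1−t) dt) dx. Then ν_p is Q-invariant: ∫ Qφ dν_p = ∫ φ dν_p for every bounded Borel function φ on [0,1]. -/

import Mathlib

open MeasureTheory Filter Set intervalIntegral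

/-- The Diaconis–Friedman transition operator with weight function `p` (and `q = 1 − p`). -/
noncomputable def DFQ (p : ℝ → ℝ) (φ : ℝ → ℝ) : ℝ → ℝ :=
  fun x => p x * (∫ t in (0 : ℝ)..1, φ (t * x)) +
    (1 - p x) * ∫ t in (0 : ℝ)..1, φ (t * x + 1 - t)

/-- `φ` is α-Hölder on `[0,1]` with constant `M`. -/
def HolderOnI (α : ℝ) (M : ℝ) (φ : ℝ → ℝ) : Prop :=
  ∀ x ∈ Set.Icc (0 : ℝ) 1, ∀ y ∈ Set.Icc (0 : ℝ) 1, |φ x - φ y| ≤ M * |x - y| ^ α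

/-- The (non-normalized) invariant density
`x ↦ exp(∫_x^{1/2} p(t)/t dt + ∫_{1/2}^x (1−p(t))/(1−t) dt)`. -/
noncomputable def DFdensity (p : ℝ → ℝ) (x : ℝ) : ℝ :=
  Real.exp ((∫ t in x..(1 / 2 : ℝ), p t / t) + ∫ t in (1 / 2 : ℝ)..x, (1 - p t) / (1 - t))

lemma DF_holder_cont {α M : ℝ} {p : ℝ → ℝ} (hα0 : 0 < α) (hH : HolderOnI α M p) :
    ContinuousOn p (Icc (0:ℝ) 1) := by
  intro x hx
  rw [ContinuousWithinAt, tendsto_iff_dist_tendsto_zero]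
  have h1 : Tendsto (fun y => M * |y - x| ^ α) (nhdsWithin x (Icc (0:ℝ) 1)) (nhds 0) := by
    have h2 : Tendsto (fun y : ℝ => |y - x|) (nhdsWithin x (Icc (0:ℝ) 1)) (nhds 0) := by
      have : Tendsto (fun y : ℝ => |y - x|) (nhds x) (nhds |x - x|) :=
        ((continuous_id.sub continuous_const).abs).tendsto x
      simp only [sub_self, abs_zero] at this
      exact this.mono_left nhdsWithin_le_nhds
    have h3 : ContinuousAt (fun t : ℝ => t ^ α) 0 :=
      Real.continuousAt_rpow_const 0 α (Or.inr hα0.le)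
    have h4 := (h3.tendsto.comp h2)
    rw [Real.zero_rpow hα0.ne'] at h4
    simpa using (h4.const_mul M)
  refine squeeze_zero' ?_ ?_ h1
  · exact Eventually.of_forall fun y => dist_nonneg
  · filter_upwards [self_mem_nhdsWithin] with y hy
    simpa [Real.dist_eq] using hH y hy x hx

lemma DF_M_nonneg {α M : ℝ} {p : ℝ → ℝ} (hα0 : 0 < α) (hH : HolderOnI α M p) : 0 ≤ M := by
  have := hH 0 (by norm_num) 1 (by norm_num)
  simp at this
  calc (0:ℝ) ≤ |p 0 - p 1| := abs_nonneg _
    _ ≤ M := by simpa [Real.one_rpow] using this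

lemma DF_uIcc_sub {x : ℝ} (hx : x ∈ Ioo (0:ℝ) 1) : uIcc x (1/2 : ℝ) ⊆ Ioo (0:ℝ) 1 :=
  (Set.ordConnected_Ioo).uIcc_subset hx (by norm_num)

lemma DF_cont_integrand1 {p : ℝ → ℝ} (hc : ContinuousOn p (Icc (0:ℝ) 1)) :
    ContinuousOn (fun t => p t / t) (Ioo (0:ℝ) 1) := by
  intro t ht
  exact ((hc t (Ioo_subset_Icc_self ht)).mono Ioo_subset_Icc_self).div
    continuousWithinAt_id (ne_of_gt ht.1)

lemma DF_cont_integrand2 {p : ℝ → ℝ} (hc : ContinuousOn p (Icc (0:ℝ) 1)) :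
    ContinuousOn (fun t => (1 - p t) / (1 - t)) (Ioo (0:ℝ) 1) := by
  intro t ht
  exact ((continuousWithinAt_const.sub ((hc t (Ioo_subset_Icc_self ht)).mono Ioo_subset_Icc_self))).div
    (continuousWithinAt_const.sub continuousWithinAt_id) (by linarith [ht.2] : (1:ℝ) - t ≠ 0)

lemma DF_hasDerivAt_density {p : ℝ → ℝ} (hc : ContinuousOn p (Icc (0:ℝ) 1))
    {x : ℝ} (hx : x ∈ Ioo (0:ℝ) 1) :
    HasDerivAt (DFdensity p) (DFdensity p x * ((1 - p x) / (1 - x) - p x / x)) x := by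
  have hsub := DF_uIcc_sub hx
  have h1c := DF_cont_integrand1 hc
  have h2c := DF_cont_integrand2 hc
  have hI1 : IntervalIntegrable (fun t => p t / t) volume x (1/2 : ℝ) :=
    (h1c.mono hsub).intervalIntegrable
  have hI2 : IntervalIntegrable (fun t => (1 - p t) / (1 - t)) volume (1/2 : ℝ) x :=
    (h2c.mono (by rw [uIcc_comm]; exact hsub)).intervalIntegrable
  have hm1 : StronglyMeasurableAtFilter (fun t => p t / t) (nhds x) volume :=
    h1c.stronglyMeasurableAtFilter isOpen_Ioo x hx
  have hm2 : StronglyMeasurableAtFilter (fun t => (1 - p t) / (1 - t)) (nhds x) volume :=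
    h2c.stronglyMeasurableAtFilter isOpen_Ioo x hx
  have hc1 : ContinuousAt (fun t => p t / t) x :=
    h1c.continuousAt (isOpen_Ioo.mem_nhds hx)
  have hc2 : ContinuousAt (fun t => (1 - p t) / (1 - t)) x :=
    h2c.continuousAt (isOpen_Ioo.mem_nhds hx)
  have hd1 : HasDerivAt (fun u => ∫ t in u..(1/2 : ℝ), p t / t) (-(p x / x)) x :=
    integral_hasDerivAt_left hI1 hm1 hc1
  have hd2 : HasDerivAt (fun u => ∫ t in (1/2 : ℝ)..u, (1 - p t) / (1 - t))
      ((1 - p x) / (1 - x)) x := integral_hasDerivAt_right hI2 hm2 hc2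
  have h3 := (hd1.add hd2).exp
  have he : DFdensity p x * ((1 - p x) / (1 - x) - p x / x) =
      Real.exp ((∫ t in x..(1/2 : ℝ), p t / t) + ∫ t in (1/2 : ℝ)..x, (1 - p t) / (1 - t)) *
        (-(p x / x) + (1 - p x) / (1 - x)) := by
    rw [DFdensity]; ring
  rw [he]
  exact h3

lemma DF_density_pos {p : ℝ → ℝ} (x : ℝ) : 0 < DFdensity p x := Real.exp_pos _

lemma DF_density_contOn {p : ℝ → ℝ} (hc : ContinuousOn p (Icc (0:ℝ) 1)) :
    ContinuousOn (DFdensity p) (Ioo (0:ℝ) 1) := fun x hx =>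
  (DF_hasDerivAt_density hc hx).continuousAt.continuousWithinAt

lemma DF_rpow_contOn {r : ℝ} : ContinuousOn (fun t : ℝ => t ^ r) (Ioo (0:ℝ) 1) :=
  fun t ht => (Real.continuousAt_rpow_const t r (Or.inl (ne_of_gt ht.1))).continuousWithinAt

lemma DF_inv_contOn : ContinuousOn (fun t : ℝ => t⁻¹) (Ioo (0:ℝ) 1) :=
  fun t ht => (continuousAt_inv₀ (ne_of_gt ht.1)).continuousWithinAt

lemma DF_density_bound {α M : ℝ} {p : ℝ → ℝ} (hα0 : 0 < α) (hH : HolderOnI α M p)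
    (hM0 : 0 ≤ M) (hp01 : ∀ x ∈ Icc (0:ℝ) 1, p x ∈ Icc (0:ℝ) 1) :
    ∀ x ∈ Ioo (0:ℝ) 1, DFdensity p x ≤
      Real.exp (M * (1/2 : ℝ) ^ α / α) * (x ^ (-(p 0)) + (1 - x) ^ (-(1 - p 1))) := by
  intro x hx
  obtain ⟨hx0, hx1⟩ := hx
  have hp0 : p 0 ∈ Icc (0:ℝ) 1 := hp01 0 (by norm_num)
  have hp1 : p 1 ∈ Icc (0:ℝ) 1 := hp01 1 (by norm_num)
  have hKpos : (0:ℝ) < Real.exp (M * (1/2 : ℝ) ^ α / α) := Real.exp_pos _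
  have hxa : (0:ℝ) ≤ x ^ (-(p 0)) := Real.rpow_nonneg hx0.le _
  have hxb : (0:ℝ) ≤ (1 - x) ^ (-(1 - p 1)) := Real.rpow_nonneg (by linarith) _
  rcases le_or_gt x (1/2 : ℝ) with hhalf | hhalf
  · -- case x ≤ 1/2
    have hR : (∫ t in (1/2 : ℝ)..x, (1 - p t) / (1 - t)) ≤ 0 := by
      rw [intervalIntegral.integral_symm]
      have : 0 ≤ ∫ t in x..(1/2 : ℝ), (1 - p t) / (1 - t) := by
        apply intervalIntegral.integral_nonneg hhalf
        intro u hu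
        have hu1 : u ∈ Icc (0:ℝ) 1 := ⟨le_trans hx0.le hu.1, by linarith [hu.2]⟩
        have := (hp01 u hu1).2
        have : (0:ℝ) ≤ 1 - p u := by linarith
        have h1u : (0:ℝ) < 1 - u := by
          have := hu.2; have : u ≤ (1/2:ℝ) := hu.2; linarith
        positivity
      linarith
    have hsub : uIcc x (1/2 : ℝ) ⊆ Ioo (0:ℝ) 1 := DF_uIcc_sub ⟨hx0, hx1⟩
    have hint1 : IntervalIntegrable (fun t => p t / t) volume x (1/2 : ℝ) :=
      ((DF_cont_integrand1 (DF_holder_cont hα0 hH)).mono hsub).intervalIntegrable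
    have hint2 : IntervalIntegrable (fun t => p 0 * t⁻¹ + M * t ^ (α - 1)) volume x (1/2 : ℝ) := by
      apply ContinuousOn.intervalIntegrable
      apply ContinuousOn.mono _ hsub
      exact (DF_inv_contOn.const_smul (p 0)).add (DF_rpow_contOn.const_smul M)
    have hL1 : (∫ t in x..(1/2 : ℝ), p t / t) ≤
        ∫ t in x..(1/2 : ℝ), (p 0 * t⁻¹ + M * t ^ (α - 1)) := by
      apply intervalIntegral.integral_mono_on hhalf hint1 hint2
      intro t ht
      have ht0 : 0 < t := lt_of_lt_of_le hx0 ht.1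
      have htI : t ∈ Icc (0:ℝ) 1 := ⟨ht0.le, by linarith [ht.2]⟩
      have hHt := hH t htI 0 (by norm_num)
      have habs : |t - 0| ^ α = t ^ α := by rw [sub_zero, abs_of_pos ht0]
      rw [habs] at hHt
      have hpt : p t ≤ p 0 + M * t ^ α := by
        have := abs_sub_le_iff.mp hHt
        linarith [this.1]
      have hta : t ^ (α - 1) = t ^ α / t := by
        rw [Real.rpow_sub ht0, Real.rpow_one]
      rw [hta]
      rw [div_le_iff₀ ht0] at *
      calc p t ≤ p 0 + M * t ^ α := hpt
        _ = (p 0 * t⁻¹ + M * (t ^ α / t)) * t := by field_simp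
    have hval : (∫ t in x..(1/2 : ℝ), (p 0 * t⁻¹ + M * t ^ (α - 1))) =
        p 0 * Real.log ((1/2) / x) + M * (((1/2:ℝ) ^ α - x ^ α) / α) := by
      have ha : IntervalIntegrable (fun t : ℝ => p 0 * t⁻¹) volume x (1/2 : ℝ) := by
        apply ContinuousOn.intervalIntegrable
        exact (DF_inv_contOn.mono hsub).const_smul (p 0)
      have hb : IntervalIntegrable (fun t : ℝ => M * t ^ (α - 1)) volume x (1/2 : ℝ) := by
        apply ContinuousOn.intervalIntegrable
        exact (DF_rpow_contOn.mono hsub).const_smul M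
      rw [intervalIntegral.integral_add ha hb]
      rw [intervalIntegral.integral_const_mul, intervalIntegral.integral_const_mul]
      rw [integral_inv (fun h => absurd (hsub h) (by simp))]
      rw [integral_rpow (Or.inl (by linarith))]
      rw [sub_add_cancel]
    have hLle : (∫ t in x..(1/2 : ℝ), p t / t) ≤
        p 0 * Real.log ((1/2) / x) + M * (1/2:ℝ) ^ α / α := by
      rw [hval] at hL1
      have hxα : 0 ≤ x ^ α := Real.rpow_nonneg hx0.le _
      have : M * (((1/2:ℝ) ^ α - x ^ α) / α) ≤ M * (1/2:ℝ) ^ α / α := by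
        rw [mul_div_assoc]
        gcongr
        linarith
      linarith
    -- conclude case x ≤ 1/2
    have hdiv : (0:ℝ) < (1/2) / x := by positivity
    have hexp : Real.exp (p 0 * Real.log ((1/2) / x)) = ((1/2) / x) ^ (p 0) := by
      rw [Real.rpow_def_of_pos hdiv, mul_comm]
    have hmono : ((1/2 : ℝ) / x) ^ (p 0) ≤ x ^ (-(p 0)) := by
      have h1 : ((1/2 : ℝ) / x) ≤ x⁻¹ := by
        rw [div_le_iff₀ hx0] at *
        rw [inv_mul_cancel₀ (ne_of_gt hx0)]
        linarith
      calc ((1/2 : ℝ) / x) ^ (p 0) ≤ (x⁻¹) ^ (p 0) :=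
            Real.rpow_le_rpow (by positivity) h1 hp0.1
        _ = x ^ (-(p 0)) := by rw [Real.inv_rpow hx0.le, ← Real.rpow_neg hx0.le]
    have : DFdensity p x ≤ Real.exp (M * (1/2:ℝ) ^ α / α) * (x ^ (-(p 0))) := by
      rw [DFdensity]
      calc Real.exp ((∫ t in x..(1/2:ℝ), p t / t) + ∫ t in (1/2:ℝ)..x, (1 - p t) / (1 - t))
          ≤ Real.exp (p 0 * Real.log ((1/2) / x) + M * (1/2:ℝ) ^ α / α) := by
            apply Real.exp_le_exp.mpr; linarith
        _ = Real.exp (M * (1/2:ℝ) ^ α / α) * Real.exp (p 0 * Real.log ((1/2) / x)) := by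
            rw [← Real.exp_add]; ring_nf
        _ ≤ Real.exp (M * (1/2:ℝ) ^ α / α) * (x ^ (-(p 0))) := by
            rw [hexp]
            exact mul_le_mul_of_nonneg_left hmono hKpos.le
    nlinarith
  · -- case 1/2 < x
    have hL : (∫ t in x..(1/2 : ℝ), p t / t) ≤ 0 := by
      rw [intervalIntegral.integral_symm]
      have : 0 ≤ ∫ t in (1/2 : ℝ)..x, p t / t := by
        apply intervalIntegral.integral_nonneg hhalf.le
        intro u hu
        have hu0 : (0:ℝ) < u := lt_of_lt_of_le (by norm_num) hu.1
        have huI : u ∈ Icc (0:ℝ) 1 := ⟨hu0.le, le_trans hu.2 hx1.le⟩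
        have := (hp01 u huI).1
        positivity
      linarith
    have hsub : uIcc (1/2 : ℝ) x ⊆ Ioo (0:ℝ) 1 := by
      rw [uIcc_comm]; exact DF_uIcc_sub ⟨hx0, hx1⟩
    have hcont2 : ContinuousOn (fun t : ℝ => (1 - p 1) * (1 - t)⁻¹ + M * (1 - t) ^ (α - 1))
        (uIcc (1/2 : ℝ) x) := by
      intro t ht
      rw [uIcc_of_le hhalf.le] at ht
      have h1t : (0:ℝ) < 1 - t := by linarith [ht.2]
      apply ContinuousWithinAt.add
      · exact continuousWithinAt_const.mul
          ((continuousWithinAt_const.sub continuousWithinAt_id).inv₀ (ne_of_gt h1t))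
      · exact continuousWithinAt_const.mul
          (((Real.continuousAt_rpow_const (1 - t) (α - 1) (Or.inl (ne_of_gt h1t))).comp
            ((continuous_const.sub continuous_id).continuousAt)).continuousWithinAt)
    have hint1 : IntervalIntegrable (fun t => (1 - p t) / (1 - t)) volume (1/2 : ℝ) x :=
      ((DF_cont_integrand2 (DF_holder_cont hα0 hH)).mono hsub).intervalIntegrable
    have hint2 : IntervalIntegrable (fun t : ℝ => (1 - p 1) * (1 - t)⁻¹ + M * (1 - t) ^ (α - 1))
        volume (1/2 : ℝ) x := hcont2.intervalIntegrable
    have hR1 : (∫ t in (1/2 : ℝ)..x, (1 - p t) / (1 - t)) ≤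
        ∫ t in (1/2 : ℝ)..x, ((1 - p 1) * (1 - t)⁻¹ + M * (1 - t) ^ (α - 1)) := by
      apply intervalIntegral.integral_mono_on hhalf.le hint1 hint2
      intro t ht
      have h1t : (0:ℝ) < 1 - t := by linarith [ht.2]
      have htI : t ∈ Icc (0:ℝ) 1 := ⟨by linarith [ht.1], by linarith [ht.2]⟩
      have hHt := hH t htI 1 (by norm_num)
      have habs : |t - 1| ^ α = (1 - t) ^ α := by
        rw [abs_sub_comm, abs_of_pos h1t]
      rw [habs] at hHt
      have hpt : 1 - p t ≤ (1 - p 1) + M * (1 - t) ^ α := by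
        have := abs_sub_le_iff.mp hHt
        linarith [this.2]
      have hta : (1 - t) ^ (α - 1) = (1 - t) ^ α / (1 - t) := by
        rw [Real.rpow_sub h1t, Real.rpow_one]
      rw [hta, div_le_iff₀ h1t]
      calc 1 - p t ≤ (1 - p 1) + M * (1 - t) ^ α := hpt
        _ = ((1 - p 1) * (1 - t)⁻¹ + M * ((1 - t) ^ α / (1 - t))) * (1 - t) := by field_simp
    have hcs := intervalIntegral.integral_comp_sub_left
      (fun u : ℝ => (1 - p 1) * u⁻¹ + M * u ^ (α - 1)) 1 (a := (1/2 : ℝ)) (b := x)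
    have hone : (1 : ℝ) - 1/2 = 1/2 := by norm_num
    rw [hone] at hcs
    have hsub' : uIcc (1 - x) (1/2 : ℝ) ⊆ Ioo (0:ℝ) 1 :=
      (Set.ordConnected_Ioo).uIcc_subset ⟨by linarith, by linarith⟩ (by norm_num)
    have hval : (∫ t in (1/2 : ℝ)..x, ((1 - p 1) * (1 - t)⁻¹ + M * (1 - t) ^ (α - 1))) =
        (1 - p 1) * Real.log ((1/2) / (1 - x)) + M * (((1/2:ℝ) ^ α - (1 - x) ^ α) / α) := by
      rw [hcs]
      have ha : IntervalIntegrable (fun t : ℝ => (1 - p 1) * t⁻¹) volume (1 - x) (1/2 : ℝ) := by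
        apply ContinuousOn.intervalIntegrable
        exact (DF_inv_contOn.mono hsub').const_smul (1 - p 1)
      have hb : IntervalIntegrable (fun t : ℝ => M * t ^ (α - 1)) volume (1 - x) (1/2 : ℝ) := by
        apply ContinuousOn.intervalIntegrable
        exact (DF_rpow_contOn.mono hsub').const_smul M
      rw [intervalIntegral.integral_add ha hb]
      rw [intervalIntegral.integral_const_mul, intervalIntegral.integral_const_mul]
      rw [integral_inv (fun h => absurd (hsub' h) (by simp))]
      rw [integral_rpow (Or.inl (by linarith))]
      rw [sub_add_cancel]
    have hRle : (∫ t in (1/2 : ℝ)..x, (1 - p t) / (1 - t)) ≤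
        (1 - p 1) * Real.log ((1/2) / (1 - x)) + M * (1/2:ℝ) ^ α / α := by
      rw [hval] at hR1
      have hxα : 0 ≤ (1 - x) ^ α := Real.rpow_nonneg (by linarith) _
      have : M * (((1/2:ℝ) ^ α - (1 - x) ^ α) / α) ≤ M * (1/2:ℝ) ^ α / α := by
        rw [mul_div_assoc]
        gcongr
        linarith
      linarith
    have h1x : (0:ℝ) < 1 - x := by linarith
    have hq1 : 0 ≤ 1 - p 1 := by linarith [hp1.2]
    have hdiv : (0:ℝ) < (1/2) / (1 - x) := by positivity
    have hexp : Real.exp ((1 - p 1) * Real.log ((1/2) / (1 - x))) = ((1/2) / (1 - x)) ^ (1 - p 1) := by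
      rw [Real.rpow_def_of_pos hdiv, mul_comm]
    have hmono : ((1/2 : ℝ) / (1 - x)) ^ (1 - p 1) ≤ (1 - x) ^ (-(1 - p 1)) := by
      have h1 : ((1/2 : ℝ) / (1 - x)) ≤ (1 - x)⁻¹ := by
        rw [div_le_iff₀ h1x, inv_mul_cancel₀ (ne_of_gt h1x)]
        linarith
      calc ((1/2 : ℝ) / (1 - x)) ^ (1 - p 1) ≤ ((1 - x)⁻¹) ^ (1 - p 1) :=
            Real.rpow_le_rpow (by positivity) h1 hq1
        _ = (1 - x) ^ (-(1 - p 1)) := by rw [Real.inv_rpow h1x.le, ← Real.rpow_neg h1x.le]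
    have : DFdensity p x ≤ Real.exp (M * (1/2:ℝ) ^ α / α) * ((1 - x) ^ (-(1 - p 1))) := by
      rw [DFdensity]
      calc Real.exp ((∫ t in x..(1/2:ℝ), p t / t) + ∫ t in (1/2:ℝ)..x, (1 - p t) / (1 - t))
          ≤ Real.exp ((1 - p 1) * Real.log ((1/2) / (1 - x)) + M * (1/2:ℝ) ^ α / α) := by
            apply Real.exp_le_exp.mpr; linarith
        _ = Real.exp (M * (1/2:ℝ) ^ α / α) * Real.exp ((1 - p 1) * Real.log ((1/2) / (1 - x))) := by
            rw [← Real.exp_add]; ring_nf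
        _ ≤ Real.exp (M * (1/2:ℝ) ^ α / α) * ((1 - x) ^ (-(1 - p 1))) := by
            rw [hexp]
            exact mul_le_mul_of_nonneg_left hmono hKpos.le
    nlinarith

lemma DF_density_integrable {α M : ℝ} {p : ℝ → ℝ} (hα0 : 0 < α) (hH : HolderOnI α M p)
    (hM0 : 0 ≤ M) (hp01 : ∀ x ∈ Icc (0:ℝ) 1, p x ∈ Icc (0:ℝ) 1)
    (hp0 : p 0 < 1) (hq1 : 1 - p 1 < 1) :
    IntegrableOn (DFdensity p) (Ioo (0:ℝ) 1) := by
  have hg1 : IntegrableOn (fun x : ℝ => x ^ (-(p 0))) (Ioo (0:ℝ) 1) := by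
    have h := intervalIntegral.intervalIntegrable_rpow' (a := (0:ℝ)) (b := 1)
      (r := -(p 0)) (by linarith)
    rwa [intervalIntegrable_iff_integrableOn_Ioo_of_le (by norm_num)] at h
  have hg2 : IntegrableOn (fun x : ℝ => (1 - x) ^ (-(1 - p 1))) (Ioo (0:ℝ) 1) := by
    have h := intervalIntegral.intervalIntegrable_rpow' (a := (0:ℝ)) (b := 1)
      (r := -(1 - p 1)) (by linarith)
    have h2 := (h.comp_sub_left 1).symm
    simp only [sub_zero, sub_self] at h2
    rwa [intervalIntegrable_iff_integrableOn_Ioo_of_le (by norm_num)] at h2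
  have hK := DF_density_bound hα0 hH hM0 hp01
  apply Integrable.mono' (((hg1.add hg2).const_mul (Real.exp (M * (1/2 : ℝ) ^ α / α))))
  · exact ((DF_density_contOn (DF_holder_cont hα0 hH)).aestronglyMeasurable measurableSet_Ioo)
  · rw [ae_restrict_iff' measurableSet_Ioo]
    filter_upwards with x hx
    rw [Real.norm_eq_abs, abs_of_pos (DF_density_pos x)]
    exact hK x hx

lemma DF_Cp_pos {α M : ℝ} {p : ℝ → ℝ} (hα0 : 0 < α) (hH : HolderOnI α M p)
    (hM0 : 0 ≤ M) (hp01 : ∀ x ∈ Icc (0:ℝ) 1, p x ∈ Icc (0:ℝ) 1)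
    (hp0 : p 0 < 1) (hq1 : 1 - p 1 < 1) :
    0 < ∫ x in Ioo (0:ℝ) 1, DFdensity p x := by
  rw [setIntegral_pos_iff_support_of_nonneg_ae]
  · have : Function.support (DFdensity p) = univ := by
      ext y; simp [Function.mem_support, ne_of_gt (DF_density_pos (p := p) y)]
    rw [this, univ_inter]
    simp [Real.volume_Ioo]
  · exact Eventually.of_forall fun x => (DF_density_pos x).le
  · exact DF_density_integrable hα0 hH hM0 hp01 hp0 hq1

lemma DF_finite_restrict : IsFiniteMeasure (volume.restrict (Ioo (0:ℝ) 1)) := by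
  constructor
  rw [Measure.restrict_apply_univ]
  simp [Real.volume_Ioo]

lemma DF_fubini_lt {W φ : ℝ → ℝ} {C : ℝ}
    (hWm : AEStronglyMeasurable W (volume.restrict (Ioo (0:ℝ) 1)))
    (hWx : IntegrableOn (fun x => W x * x) (Ioo (0:ℝ) 1))
    (hφ : Measurable φ) (hC : ∀ x, |φ x| ≤ C) :
    (∫ x in Ioo (0:ℝ) 1, W x * ∫ u in Ioo 0 x, φ u)
      = (∫ u in Ioo (0:ℝ) 1, (∫ x in Ioo u 1, W x) * φ u)
    ∧ Integrable (fun u => (∫ x in Ioo u 1, W x) * φ u) (volume.restrict (Ioo (0:ℝ) 1))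
    ∧ Integrable (fun x => W x * ∫ u in Ioo 0 x, φ u) (volume.restrict (Ioo (0:ℝ) 1)) := by
  haveI := DF_finite_restrict
  set μ := volume.restrict (Ioo (0:ℝ) 1) with hμ
  have hC0 : 0 ≤ C := (abs_nonneg _).trans (hC 0)
  set s : Set (ℝ × ℝ) := {z : ℝ × ℝ | z.2 < z.1} with hsdef
  have hs : MeasurableSet s := measurableSet_lt measurable_snd measurable_fst
  set F : ℝ × ℝ → ℝ := s.indicator (fun z => W z.1 * φ z.2) with hFdef
  have hFm : AEStronglyMeasurable F (μ.prod μ) :=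
    ((hWm.comp_fst).mul (hφ.aestronglyMeasurable.comp_snd)).indicator hs
  have hFx : ∀ x, (fun u => F (x, u)) = fun u => (Iio x).indicator (fun u => W x * φ u) u := by
    intro x; funext u
    simp only [hFdef, hsdef, Set.indicator_apply, Set.mem_setOf_eq, Set.mem_Iio]
  have hFu : ∀ u, (fun x => F (x, u)) = fun x => (Ioi u).indicator (fun x => W x * φ u) x := by
    intro u; funext x
    simp only [hFdef, hsdef, Set.indicator_apply, Set.mem_setOf_eq, Set.mem_Ioi]
  have hbound : ∀ x u : ℝ, ‖F (x, u)‖ ≤ (Iio x).indicator (fun _ => |W x| * C) u := by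
    intro x u
    rw [hFdef]
    by_cases h : (x, u) ∈ s
    · have hu : u ∈ Iio x := h
      rw [Set.indicator_of_mem h, Set.indicator_of_mem hu, Real.norm_eq_abs, abs_mul]
      exact mul_le_mul_of_nonneg_left (hC u) (abs_nonneg _)
    · have hu : u ∉ Iio x := h
      rw [Set.indicator_of_notMem h, Set.indicator_of_notMem hu]
      simp
  -- integrability of each slice in u
  have hslice : ∀ x : ℝ, Integrable (fun u => F (x, u)) μ := by
    intro x
    apply Integrable.mono' (integrable_const (|W x| * C))
    · rw [hFx x]
      exact (aestronglyMeasurable_const.mul hφ.aestronglyMeasurable).indicator measurableSet_Iio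
    · filter_upwards with u
      refine le_trans (hbound x u) ?_
      refine Set.indicator_le' (fun a _ => le_rfl) (fun a _ => by positivity) u
  -- the inner integrals
  have hIio : ∀ x ∈ Ioo (0:ℝ) 1, Iio x ∩ Ioo (0:ℝ) 1 = Ioo 0 x := by
    intro x hx
    ext u; simp only [mem_inter_iff, mem_Iio, mem_Ioo]
    constructor
    · rintro ⟨h1, h2, h3⟩; exact ⟨h2, h1⟩
    · rintro ⟨h1, h2⟩; exact ⟨h2, h1, lt_of_lt_of_le h2 hx.2.le⟩
  have hinner : ∀ x ∈ Ioo (0:ℝ) 1, (∫ u, F (x, u) ∂μ) = W x * ∫ u in Ioo 0 x, φ u := by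
    intro x hx
    rw [hFx x, hμ, MeasureTheory.integral_indicator measurableSet_Iio,
      Measure.restrict_restrict measurableSet_Iio, hIio x hx,
      MeasureTheory.integral_const_mul]
  have hinner' : ∀ u ∈ Ioo (0:ℝ) 1, (∫ x, F (x, u) ∂μ) = (∫ x in Ioo u 1, W x) * φ u := by
    intro u hu
    rw [hFu u, hμ, MeasureTheory.integral_indicator measurableSet_Ioi,
      Measure.restrict_restrict measurableSet_Ioi]
    have : Ioi u ∩ Ioo (0:ℝ) 1 = Ioo u 1 := by
      ext x; simp only [mem_inter_iff, mem_Ioi, mem_Ioo]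
      constructor
      · rintro ⟨h1, h2, h3⟩; exact ⟨h1, h3⟩
      · rintro ⟨h1, h2⟩; exact ⟨h1, lt_trans hu.1 h1, h2⟩
    rw [this, MeasureTheory.integral_mul_const]
  -- product integrability
  have hInt : Integrable F (μ.prod μ) := by
    rw [integrable_prod_iff hFm]
    refine ⟨Eventually.of_forall hslice, ?_⟩
    have hB : Integrable (fun x => C * ‖W x * x‖) μ := hWx.norm.const_mul C
    apply Integrable.mono' hB hFm.norm.integral_prod_right'
    rw [hμ, ae_restrict_iff' measurableSet_Ioo]
    filter_upwards with x hx
    have hnn : 0 ≤ ∫ u, ‖F (x, u)‖ ∂μ := integral_nonneg fun u => norm_nonneg _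
    rw [Real.norm_eq_abs, abs_of_nonneg hnn]
    have hle : (∫ u, ‖F (x, u)‖ ∂μ) ≤ ∫ u, (Iio x).indicator (fun _ => |W x| * C) u ∂μ := by
      apply integral_mono_of_nonneg (Eventually.of_forall fun u => norm_nonneg _)
      · exact (integrable_const (|W x| * C)).indicator measurableSet_Iio
      · exact Eventually.of_forall fun u => hbound x u
    refine hle.trans ?_
    rw [hμ, MeasureTheory.integral_indicator measurableSet_Iio,
      Measure.restrict_restrict measurableSet_Iio, hIio x hx, setIntegral_const, measureReal_def,
      Real.volume_Ioo, sub_zero, ENNReal.toReal_ofReal hx.1.le, smul_eq_mul]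
    have hnx : ‖W x * x‖ = |W x| * x := by
      rw [Real.norm_eq_abs, abs_mul, abs_of_nonneg hx.1.le]
    rw [hnx]
    exact le_of_eq (by ring)
  -- swap
  have hswap := integral_integral_swap (f := fun x u => F (x, u)) (μ := μ) (ν := μ) hInt
  have hmem : MeasurableSet (Ioo (0:ℝ) 1) := measurableSet_Ioo
  refine ⟨?_, ?_, ?_⟩
  · calc (∫ x in Ioo (0:ℝ) 1, W x * ∫ u in Ioo 0 x, φ u)
        = ∫ x, (∫ u, F (x, u) ∂μ) ∂μ := by
          rw [hμ]
          exact (setIntegral_congr_fun hmem fun x hx => (hinner x hx).symm).symm ▸ rfl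
      _ = ∫ u, (∫ x, F (x, u) ∂μ) ∂μ := hswap
      _ = ∫ u in Ioo (0:ℝ) 1, (∫ x in Ioo u 1, W x) * φ u := by
          rw [hμ]
          exact setIntegral_congr_fun hmem fun u hu => hinner' u hu
  · refine (hInt.integral_prod_right).congr ?_
    filter_upwards [self_mem_ae_restrict hmem] with u hu
    exact hinner' u hu
  · refine (hInt.integral_prod_left).congr ?_
    filter_upwards [self_mem_ae_restrict hmem] with x hx
    exact hinner x hx

lemma DF_fubini_gt {W φ : ℝ → ℝ} {C : ℝ}
    (hWm : AEStronglyMeasurable W (volume.restrict (Ioo (0:ℝ) 1)))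
    (hWx : IntegrableOn (fun x => W x * (1 - x)) (Ioo (0:ℝ) 1))
    (hφ : Measurable φ) (hC : ∀ x, |φ x| ≤ C) :
    (∫ x in Ioo (0:ℝ) 1, W x * ∫ u in Ioo x 1, φ u)
      = (∫ u in Ioo (0:ℝ) 1, (∫ x in Ioo 0 u, W x) * φ u)
    ∧ Integrable (fun u => (∫ x in Ioo 0 u, W x) * φ u) (volume.restrict (Ioo (0:ℝ) 1))
    ∧ Integrable (fun x => W x * ∫ u in Ioo x 1, φ u) (volume.restrict (Ioo (0:ℝ) 1)) := by
  haveI := DF_finite_restrict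
  set μ := volume.restrict (Ioo (0:ℝ) 1) with hμ
  have hC0 : 0 ≤ C := (abs_nonneg _).trans (hC 0)
  set s : Set (ℝ × ℝ) := {z : ℝ × ℝ | z.1 < z.2} with hsdef
  have hs : MeasurableSet s := measurableSet_lt measurable_fst measurable_snd
  set F : ℝ × ℝ → ℝ := s.indicator (fun z => W z.1 * φ z.2) with hFdef
  have hFm : AEStronglyMeasurable F (μ.prod μ) :=
    ((hWm.comp_fst).mul (hφ.aestronglyMeasurable.comp_snd)).indicator hs
  have hFx : ∀ x, (fun u => F (x, u)) = fun u => (Ioi x).indicator (fun u => W x * φ u) u := by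
    intro x; funext u
    simp only [hFdef, hsdef, Set.indicator_apply, Set.mem_setOf_eq, Set.mem_Ioi]
  have hFu : ∀ u, (fun x => F (x, u)) = fun x => (Iio u).indicator (fun x => W x * φ u) x := by
    intro u; funext x
    simp only [hFdef, hsdef, Set.indicator_apply, Set.mem_setOf_eq, Set.mem_Iio]
  have hbound : ∀ x u : ℝ, ‖F (x, u)‖ ≤ (Ioi x).indicator (fun _ => |W x| * C) u := by
    intro x u
    rw [hFdef]
    by_cases h : (x, u) ∈ s
    · have hu : u ∈ Ioi x := h
      rw [Set.indicator_of_mem h, Set.indicator_of_mem hu, Real.norm_eq_abs, abs_mul]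
      exact mul_le_mul_of_nonneg_left (hC u) (abs_nonneg _)
    · have hu : u ∉ Ioi x := h
      rw [Set.indicator_of_notMem h, Set.indicator_of_notMem hu]
      simp
  have hslice : ∀ x : ℝ, Integrable (fun u => F (x, u)) μ := by
    intro x
    apply Integrable.mono' (integrable_const (|W x| * C))
    · rw [hFx x]
      exact (aestronglyMeasurable_const.mul hφ.aestronglyMeasurable).indicator measurableSet_Ioi
    · filter_upwards with u
      refine le_trans (hbound x u) ?_
      refine Set.indicator_le' (fun a _ => le_rfl) (fun a _ => by positivity) u
  have hIoi : ∀ x ∈ Ioo (0:ℝ) 1, Ioi x ∩ Ioo (0:ℝ) 1 = Ioo x 1 := by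
    intro x hx
    ext u; simp only [mem_inter_iff, mem_Ioi, mem_Ioo]
    constructor
    · rintro ⟨h1, h2, h3⟩; exact ⟨h1, h3⟩
    · rintro ⟨h1, h2⟩; exact ⟨h1, lt_trans hx.1 h1, h2⟩
  have hinner : ∀ x ∈ Ioo (0:ℝ) 1, (∫ u, F (x, u) ∂μ) = W x * ∫ u in Ioo x 1, φ u := by
    intro x hx
    rw [hFx x, hμ, MeasureTheory.integral_indicator measurableSet_Ioi,
      Measure.restrict_restrict measurableSet_Ioi, hIoi x hx,
      MeasureTheory.integral_const_mul]
  have hinner' : ∀ u ∈ Ioo (0:ℝ) 1, (∫ x, F (x, u) ∂μ) = (∫ x in Ioo 0 u, W x) * φ u := by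
    intro u hu
    rw [hFu u, hμ, MeasureTheory.integral_indicator measurableSet_Iio,
      Measure.restrict_restrict measurableSet_Iio]
    have : Iio u ∩ Ioo (0:ℝ) 1 = Ioo 0 u := by
      ext x; simp only [mem_inter_iff, mem_Iio, mem_Ioo]
      constructor
      · rintro ⟨h1, h2, h3⟩; exact ⟨h2, h1⟩
      · rintro ⟨h1, h2⟩; exact ⟨h2, h1, lt_of_lt_of_le h2 hu.2.le⟩
    rw [this, MeasureTheory.integral_mul_const]
  have hInt : Integrable F (μ.prod μ) := by
    rw [integrable_prod_iff hFm]
    refine ⟨Eventually.of_forall hslice, ?_⟩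
    have hB : Integrable (fun x => C * ‖W x * (1 - x)‖) μ := hWx.norm.const_mul C
    apply Integrable.mono' hB hFm.norm.integral_prod_right'
    rw [hμ, ae_restrict_iff' measurableSet_Ioo]
    filter_upwards with x hx
    have hnn : 0 ≤ ∫ u, ‖F (x, u)‖ ∂μ := integral_nonneg fun u => norm_nonneg _
    rw [Real.norm_eq_abs, abs_of_nonneg hnn]
    have hle : (∫ u, ‖F (x, u)‖ ∂μ) ≤ ∫ u, (Ioi x).indicator (fun _ => |W x| * C) u ∂μ := by
      apply integral_mono_of_nonneg (Eventually.of_forall fun u => norm_nonneg _)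
      · exact (integrable_const (|W x| * C)).indicator measurableSet_Ioi
      · exact Eventually.of_forall fun u => hbound x u
    refine hle.trans ?_
    rw [hμ, MeasureTheory.integral_indicator measurableSet_Ioi,
      Measure.restrict_restrict measurableSet_Ioi, hIoi x hx, setIntegral_const, measureReal_def,
      Real.volume_Ioo, ENNReal.toReal_ofReal (by linarith [hx.2] : (0:ℝ) ≤ 1 - x), smul_eq_mul]
    have hnx : ‖W x * (1 - x)‖ = |W x| * (1 - x) := by
      rw [Real.norm_eq_abs, abs_mul, abs_of_nonneg (by linarith [hx.2] : (0:ℝ) ≤ 1 - x)]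
    rw [hnx]
    exact le_of_eq (by ring)
  have hswap := integral_integral_swap (f := fun x u => F (x, u)) (μ := μ) (ν := μ) hInt
  have hmem : MeasurableSet (Ioo (0:ℝ) 1) := measurableSet_Ioo
  refine ⟨?_, ?_, ?_⟩
  · calc (∫ x in Ioo (0:ℝ) 1, W x * ∫ u in Ioo x 1, φ u)
        = ∫ x, (∫ u, F (x, u) ∂μ) ∂μ := by
          rw [hμ]
          exact (setIntegral_congr_fun hmem fun x hx => (hinner x hx).symm).symm ▸ rfl
      _ = ∫ u, (∫ x, F (x, u) ∂μ) ∂μ := hswap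
      _ = ∫ u in Ioo (0:ℝ) 1, (∫ x in Ioo 0 u, W x) * φ u := by
          rw [hμ]
          exact setIntegral_congr_fun hmem fun u hu => hinner' u hu
  · refine (hInt.integral_prod_right).congr ?_
    filter_upwards [self_mem_ae_restrict hmem] with u hu
    exact hinner' u hu
  · refine (hInt.integral_prod_left).congr ?_
    filter_upwards [self_mem_ae_restrict hmem] with x hx
    exact hinner x hx

section Main

variable {α M : ℝ} {p : ℝ → ℝ}

lemma DF_w_contOn (hc : ContinuousOn p (Icc (0:ℝ) 1)) :
    ContinuousOn (fun x => p x * DFdensity p x / x) (Ioo (0:ℝ) 1) := by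
  intro x hx
  exact (((hc x (Ioo_subset_Icc_self hx)).mono Ioo_subset_Icc_self).mul
    (DF_density_contOn hc x hx)).div continuousWithinAt_id (ne_of_gt hx.1)

lemma DF_v_contOn (hc : ContinuousOn p (Icc (0:ℝ) 1)) :
    ContinuousOn (fun x => (1 - p x) * DFdensity p x / (1 - x)) (Ioo (0:ℝ) 1) := by
  intro x hx
  exact ((continuousWithinAt_const.sub
    ((hc x (Ioo_subset_Icc_self hx)).mono Ioo_subset_Icc_self)).mul
    (DF_density_contOn hc x hx)).div
    (continuousWithinAt_const.sub continuousWithinAt_id) (by linarith [hx.2] : (1:ℝ) - x ≠ 0)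

lemma DF_pf_integrable (hα0 : 0 < α) (hH : HolderOnI α M p)
    (hM0 : 0 ≤ M) (hp01 : ∀ x ∈ Icc (0:ℝ) 1, p x ∈ Icc (0:ℝ) 1)
    (hp0 : p 0 < 1) (hq1 : 1 - p 1 < 1) :
    IntegrableOn (fun x => p x * DFdensity p x) (Ioo (0:ℝ) 1) := by
  have hc := DF_holder_cont hα0 hH
  apply Integrable.mono' (DF_density_integrable hα0 hH hM0 hp01 hp0 hq1)
  · exact (((hc.mono Ioo_subset_Icc_self).mul
      (DF_density_contOn hc)).aestronglyMeasurable measurableSet_Ioo)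
  · rw [ae_restrict_iff' measurableSet_Ioo]
    filter_upwards with x hx
    have h01 := hp01 x (Ioo_subset_Icc_self hx)
    have hfp := DF_density_pos (p := p) x
    rw [Real.norm_eq_abs, abs_mul, abs_of_nonneg h01.1, abs_of_pos hfp]
    nlinarith [h01.2]

lemma DF_qf_integrable (hα0 : 0 < α) (hH : HolderOnI α M p)
    (hM0 : 0 ≤ M) (hp01 : ∀ x ∈ Icc (0:ℝ) 1, p x ∈ Icc (0:ℝ) 1)
    (hp0 : p 0 < 1) (hq1 : 1 - p 1 < 1) :
    IntegrableOn (fun x => (1 - p x) * DFdensity p x) (Ioo (0:ℝ) 1) := by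
  have hc := DF_holder_cont hα0 hH
  apply Integrable.mono' (DF_density_integrable hα0 hH hM0 hp01 hp0 hq1)
  · exact (((continuousOn_const.sub (hc.mono Ioo_subset_Icc_self)).mul
      (DF_density_contOn hc)).aestronglyMeasurable measurableSet_Ioo)
  · rw [ae_restrict_iff' measurableSet_Ioo]
    filter_upwards with x hx
    have h01 := hp01 x (Ioo_subset_Icc_self hx)
    have hfp := DF_density_pos (p := p) x
    rw [Real.norm_eq_abs, abs_mul, abs_of_nonneg (by linarith [h01.2]), abs_of_pos hfp]
    nlinarith [h01.1]

lemma DF_w_integrableOn (hα0 : 0 < α) (hH : HolderOnI α M p)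
    (hM0 : 0 ≤ M) (hp01 : ∀ x ∈ Icc (0:ℝ) 1, p x ∈ Icc (0:ℝ) 1)
    (hp0 : p 0 < 1) (hq1 : 1 - p 1 < 1) {u : ℝ} (hu : u ∈ Ioo (0:ℝ) 1) :
    IntegrableOn (fun x => p x * DFdensity p x / x) (Ioo u 1) := by
  have hc := DF_holder_cont hα0 hH
  have hsub : Ioo u 1 ⊆ Ioo (0:ℝ) 1 := Ioo_subset_Ioo hu.1.le le_rfl
  apply Integrable.mono'
    (((DF_density_integrable hα0 hH hM0 hp01 hp0 hq1).mono_set hsub).const_mul u⁻¹)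
  · exact ((DF_w_contOn hc).mono hsub).aestronglyMeasurable measurableSet_Ioo
  · rw [ae_restrict_iff' measurableSet_Ioo]
    filter_upwards with x hx
    have hx' := hsub hx
    have h01 := hp01 x (Ioo_subset_Icc_self hx')
    have hfp := DF_density_pos (p := p) x
    rw [Real.norm_eq_abs, abs_div, abs_mul, abs_of_nonneg h01.1, abs_of_pos hfp,
      abs_of_pos hx'.1, div_le_iff₀ hx'.1]
    have h1 : p x * DFdensity p x ≤ DFdensity p x := by nlinarith [h01.2]
    have h12 : (1:ℝ) ≤ u⁻¹ * x := by
      rw [inv_mul_eq_div]; exact (one_le_div hu.1).mpr hx.1.le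
    have h2 : DFdensity p x ≤ u⁻¹ * DFdensity p x * x := by
      calc DFdensity p x = 1 * DFdensity p x := (one_mul _).symm
        _ ≤ (u⁻¹ * x) * DFdensity p x := mul_le_mul_of_nonneg_right h12 hfp.le
        _ = u⁻¹ * DFdensity p x * x := by ring
    linarith

lemma DF_v_integrableOn (hα0 : 0 < α) (hH : HolderOnI α M p)
    (hM0 : 0 ≤ M) (hp01 : ∀ x ∈ Icc (0:ℝ) 1, p x ∈ Icc (0:ℝ) 1)
    (hp0 : p 0 < 1) (hq1 : 1 - p 1 < 1) {u : ℝ} (hu : u ∈ Ioo (0:ℝ) 1) :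
    IntegrableOn (fun x => (1 - p x) * DFdensity p x / (1 - x)) (Ioo 0 u) := by
  have hc := DF_holder_cont hα0 hH
  have hsub : Ioo (0:ℝ) u ⊆ Ioo (0:ℝ) 1 := Ioo_subset_Ioo le_rfl hu.2.le
  apply Integrable.mono'
    (((DF_density_integrable hα0 hH hM0 hp01 hp0 hq1).mono_set hsub).const_mul (1 - u)⁻¹)
  · exact ((DF_v_contOn hc).mono hsub).aestronglyMeasurable measurableSet_Ioo
  · rw [ae_restrict_iff' measurableSet_Ioo]
    filter_upwards with x hx
    have hx' := hsub hx
    have h01 := hp01 x (Ioo_subset_Icc_self hx')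
    have hfp := DF_density_pos (p := p) x
    have h1x : (0:ℝ) < 1 - x := by linarith [hx'.2]
    have h1u : (0:ℝ) < 1 - u := by linarith [hu.2]
    rw [Real.norm_eq_abs, abs_div, abs_mul, abs_of_nonneg (by linarith [h01.2] : (0:ℝ) ≤ 1 - p x),
      abs_of_pos hfp, abs_of_pos h1x, div_le_iff₀ h1x]
    have h1 : (1 - p x) * DFdensity p x ≤ DFdensity p x := by nlinarith [h01.1]
    have h12 : (1:ℝ) ≤ (1 - u)⁻¹ * (1 - x) := by
      rw [inv_mul_eq_div]; exact (one_le_div h1u).mpr (by linarith [hx.2])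
    have h2 : DFdensity p x ≤ (1 - u)⁻¹ * DFdensity p x * (1 - x) := by
      calc DFdensity p x = 1 * DFdensity p x := (one_mul _).symm
        _ ≤ ((1 - u)⁻¹ * (1 - x)) * DFdensity p x := mul_le_mul_of_nonneg_right h12 hfp.le
        _ = (1 - u)⁻¹ * DFdensity p x * (1 - x) := by ring
    linarith

end Main

lemma DF_g_eq_density {α M : ℝ} {p : ℝ → ℝ} (hα0 : 0 < α) (hH : HolderOnI α M p)
    (hM0 : 0 ≤ M) (hp01 : ∀ x ∈ Icc (0:ℝ) 1, p x ∈ Icc (0:ℝ) 1)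
    (hp0 : p 0 < 1) (hq1 : 1 - p 1 < 1) :
    ∀ u ∈ Ioo (0:ℝ) 1,
      (∫ x in Ioo u 1, p x * DFdensity p x / x)
        + (∫ x in Ioo 0 u, (1 - p x) * DFdensity p x / (1 - x)) = DFdensity p u := by
  have hc := DF_holder_cont hα0 hH
  set w : ℝ → ℝ := fun x => p x * DFdensity p x / x with hwdef
  set v : ℝ → ℝ := fun x => (1 - p x) * DFdensity p x / (1 - x) with hvdef
  set g₁ : ℝ → ℝ := fun u => ∫ x in Ioo u 1, w x with hg1def
  set g₂ : ℝ → ℝ := fun u => ∫ x in Ioo 0 u, v x with hg2def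
  set h : ℝ → ℝ := fun u => g₁ u + g₂ u - DFdensity p u with hhdef
  -- derivative of g₁
  have hg1d : ∀ u ∈ Ioo (0:ℝ) 1, HasDerivAt g₁ (-(w u)) u := by
    intro u hu
    have hiv : IntervalIntegrable w volume u 1 := by
      rw [intervalIntegrable_iff_integrableOn_Ioo_of_le hu.2.le]
      exact DF_w_integrableOn hα0 hH hM0 hp01 hp0 hq1 hu
    have hG := integral_hasDerivAt_left hiv
      ((DF_w_contOn hc).stronglyMeasurableAtFilter isOpen_Ioo u hu)
      ((DF_w_contOn hc).continuousAt (isOpen_Ioo.mem_nhds hu))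
    apply hG.congr_of_eventuallyEq
    filter_upwards [isOpen_Ioo.mem_nhds hu] with a (ha : a ∈ Ioo (0:ℝ) 1)
    rw [hg1def]
    rw [intervalIntegral.integral_of_le ha.2.le, integral_Ioc_eq_integral_Ioo]
  -- derivative of g₂
  have hg2d : ∀ u ∈ Ioo (0:ℝ) 1, HasDerivAt g₂ (v u) u := by
    intro u hu
    have hiv : IntervalIntegrable v volume 0 u := by
      rw [intervalIntegrable_iff_integrableOn_Ioo_of_le hu.1.le]
      exact DF_v_integrableOn hα0 hH hM0 hp01 hp0 hq1 hu
    have hG := integral_hasDerivAt_right hiv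
      ((DF_v_contOn hc).stronglyMeasurableAtFilter isOpen_Ioo u hu)
      ((DF_v_contOn hc).continuousAt (isOpen_Ioo.mem_nhds hu))
    apply hG.congr_of_eventuallyEq
    filter_upwards [isOpen_Ioo.mem_nhds hu] with a (ha : a ∈ Ioo (0:ℝ) 1)
    rw [hg2def]
    rw [intervalIntegral.integral_of_le ha.1.le, integral_Ioc_eq_integral_Ioo]
  -- h has derivative 0 on Ioo 0 1
  have hhd : ∀ u ∈ Ioo (0:ℝ) 1, HasDerivAt h 0 u := by
    intro u hu
    have hd := ((hg1d u hu).add (hg2d u hu)).sub (DF_hasDerivAt_density hc hu)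
    have : -(w u) + v u - DFdensity p u * ((1 - p u) / (1 - u) - p u / u) = 0 := by
      rw [hwdef, hvdef]
      have hu0 : u ≠ 0 := ne_of_gt hu.1
      have hu1 : (1:ℝ) - u ≠ 0 := by have := hu.2; intro hc'; apply hu.2.ne; linarith
      field_simp
      ring
    rwa [this] at hd
  -- h is constant on Ioo 0 1
  have hconst : ∀ a ∈ Ioo (0:ℝ) 1, ∀ b ∈ Ioo (0:ℝ) 1, a ≤ b → h b = h a := by
    intro a ha b hb hab
    have hIccsub : Icc a b ⊆ Ioo (0:ℝ) 1 := fun y hy => ⟨lt_of_lt_of_le ha.1 hy.1,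
      lt_of_le_of_lt hy.2 hb.2⟩
    have key := constant_of_has_deriv_right_zero (f := h) (a := a) (b := b)
      (fun y hy => (hhd y (hIccsub hy)).continuousAt.continuousWithinAt)
      (fun y hy => (hhd y (hIccsub ⟨hy.1, hy.2.le⟩)).hasDerivWithinAt)
    exact key b (right_mem_Icc.mpr hab)
  have hhalfmem : (1/2 : ℝ) ∈ Ioo (0:ℝ) 1 := by norm_num
  have hconst' : ∀ u ∈ Ioo (0:ℝ) 1, h u = h (1/2) := by
    intro u hu
    rcases le_total u (1/2 : ℝ) with hle | hle
    · exact (hconst u hu (1/2) hhalfmem hle).symm ▸ rfl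
    · exact hconst (1/2) hhalfmem u hu hle
  -- compute the integral of h over Ioo 0 1
  haveI := DF_finite_restrict
  have hone : ∀ x : ℝ, |(fun _ : ℝ => (1:ℝ)) x| ≤ 1 := fun x => by norm_num
  have hwm : AEStronglyMeasurable w (volume.restrict (Ioo (0:ℝ) 1)) :=
    (DF_w_contOn hc).aestronglyMeasurable measurableSet_Ioo
  have hvm : AEStronglyMeasurable v (volume.restrict (Ioo (0:ℝ) 1)) :=
    (DF_v_contOn hc).aestronglyMeasurable measurableSet_Ioo
  have hwx : IntegrableOn (fun x => w x * x) (Ioo (0:ℝ) 1) := by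
    apply (DF_pf_integrable hα0 hH hM0 hp01 hp0 hq1).congr
    filter_upwards [self_mem_ae_restrict (measurableSet_Ioo : MeasurableSet (Ioo (0:ℝ) 1))]
      with x hx
    have hx0 : x ≠ 0 := ne_of_gt hx.1
    rw [hwdef]
    field_simp
  have hvx : IntegrableOn (fun x => v x * (1 - x)) (Ioo (0:ℝ) 1) := by
    apply (DF_qf_integrable hα0 hH hM0 hp01 hp0 hq1).congr
    filter_upwards [self_mem_ae_restrict (measurableSet_Ioo : MeasurableSet (Ioo (0:ℝ) 1))]
      with x hx
    have h1x : (1:ℝ) - x ≠ 0 := by have := hx.2; intro hc'; apply hx.2.ne; linarith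
    rw [hvdef]
    field_simp
  obtain ⟨heq1, hint1, -⟩ := DF_fubini_lt (φ := fun _ => 1) hwm hwx measurable_const hone
  obtain ⟨heq2, hint2, -⟩ := DF_fubini_gt (φ := fun _ => 1) hvm hvx measurable_const hone
  -- identify the LHS of the Fubini identities
  have hLHS1 : (∫ x in Ioo (0:ℝ) 1, w x * ∫ u in Ioo 0 x, (1:ℝ))
      = ∫ x in Ioo (0:ℝ) 1, p x * DFdensity p x := by
    apply setIntegral_congr_fun measurableSet_Ioo
    intro x hx
    simp only []
    rw [setIntegral_const, measureReal_def, Real.volume_Ioo, sub_zero, ENNReal.toReal_ofReal hx.1.le,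
      smul_eq_mul, mul_one, hwdef]
    have hx0 : x ≠ 0 := ne_of_gt hx.1
    field_simp
  have hLHS2 : (∫ x in Ioo (0:ℝ) 1, v x * ∫ u in Ioo x 1, (1:ℝ))
      = ∫ x in Ioo (0:ℝ) 1, (1 - p x) * DFdensity p x := by
    apply setIntegral_congr_fun measurableSet_Ioo
    intro x hx
    have h1x : (1:ℝ) - x ≠ 0 := by intro hc'; apply hx.2.ne; linarith
    simp only []
    rw [setIntegral_const, measureReal_def, Real.volume_Ioo,
      ENNReal.toReal_ofReal (by linarith [hx.2] : (0:ℝ) ≤ 1 - x), smul_eq_mul, mul_one, hvdef]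
    field_simp
  have hg1int : Integrable g₁ (volume.restrict (Ioo (0:ℝ) 1)) := by
    apply hint1.congr
    filter_upwards with u
    rw [mul_one]
  have hg2int : Integrable g₂ (volume.restrict (Ioo (0:ℝ) 1)) := by
    apply hint2.congr
    filter_upwards with u
    rw [mul_one]
  have hg1val : (∫ u in Ioo (0:ℝ) 1, g₁ u) = ∫ x in Ioo (0:ℝ) 1, p x * DFdensity p x := by
    rw [← hLHS1, heq1]
    apply setIntegral_congr_fun measurableSet_Ioo
    intro u hu
    simp only []
    rw [mul_one]
  have hg2val : (∫ u in Ioo (0:ℝ) 1, g₂ u) = ∫ x in Ioo (0:ℝ) 1, (1 - p x) * DFdensity p x := by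
    rw [← hLHS2, heq2]
    apply setIntegral_congr_fun measurableSet_Ioo
    intro u hu
    simp only []
    rw [mul_one]
  have hfint := DF_density_integrable hα0 hH hM0 hp01 hp0 hq1
  have hsum : (∫ x in Ioo (0:ℝ) 1, p x * DFdensity p x)
      + (∫ x in Ioo (0:ℝ) 1, (1 - p x) * DFdensity p x) = ∫ x in Ioo (0:ℝ) 1, DFdensity p x := by
    rw [← MeasureTheory.integral_add (DF_pf_integrable hα0 hH hM0 hp01 hp0 hq1)
      (DF_qf_integrable hα0 hH hM0 hp01 hp0 hq1)]
    apply setIntegral_congr_fun measurableSet_Ioo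
    intro x hx
    simp only []
    ring
  have hintegral_h : (∫ u in Ioo (0:ℝ) 1, h u) = 0 := by
    rw [hhdef]
    simp only []
    have hadd : Integrable (fun u => g₁ u + g₂ u) (volume.restrict (Ioo (0:ℝ) 1)) :=
      hg1int.add hg2int
    rw [MeasureTheory.integral_sub hadd hfint,
      MeasureTheory.integral_add hg1int hg2int, hg1val, hg2val, hsum, sub_self]
  have hhalfzero : h (1/2) = 0 := by
    have : (∫ u in Ioo (0:ℝ) 1, h u) = ∫ u in Ioo (0:ℝ) 1, h (1/2) := by
      apply setIntegral_congr_fun measurableSet_Ioo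
      intro u hu
      exact hconst' u hu
    rw [hintegral_h] at this
    rw [setIntegral_const, measureReal_def, Real.volume_Ioo, sub_zero, ENNReal.toReal_ofReal (by norm_num),
      smul_eq_mul, one_mul] at this
    exact this.symm
  intro u hu
  have := hconst' u hu
  rw [hhalfzero, hhdef] at this
  simp only [] at this
  linarith [this]

/-- for `p ∈ H_α[0,1]` with values in `[0,1]`, `p(0) < 1`, `q(1) < 1`, the
probability measure `ν_p` with density `f_p = DFdensity p / C_p` (with
`C_p = ∫₀¹ DFdensity p`) with respect to Lebesgue measure is `Q`-invariant. -/
theorem stmt14 (α : ℝ) (hα0 : 0 < α) (hα1 : α ≤ 1)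
    (p : ℝ → ℝ) (hpH : ∃ M : ℝ, HolderOnI α M p)
    (hp01 : ∀ x ∈ Set.Icc (0 : ℝ) 1, p x ∈ Set.Icc (0 : ℝ) 1)
    (hp0 : p 0 < 1) (hq1 : 1 - p 1 < 1)
    (Cp : ℝ) (hCp : Cp = ∫ x in Set.Ioo (0 : ℝ) 1, DFdensity p x)
    (ν : Measure ℝ)
    (hν : ν = (volume.restrict (Set.Ioo (0 : ℝ) 1)).withDensity
      (fun x => ENNReal.ofReal (DFdensity p x / Cp))) :
    ∀ φ : ℝ → ℝ, Measurable φ → (∃ C : ℝ, ∀ x : ℝ, |φ x| ≤ C) →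
      ∫ x, DFQ p φ x ∂ν = ∫ x, φ x ∂ν := by
  obtain ⟨M, hH⟩ := hpH
  have hM0 : 0 ≤ M := DF_M_nonneg hα0 hH
  have hc : ContinuousOn p (Icc (0:ℝ) 1) := DF_holder_cont hα0 hH
  intro φ hφ hCb
  obtain ⟨C, hC⟩ := hCb
  have hCppos : 0 < Cp := by rw [hCp]; exact DF_Cp_pos hα0 hH hM0 hp01 hp0 hq1
  haveI := DF_finite_restrict
  -- reduce ν-integrals to weighted Lebesgue integrals
  have hν_int : ∀ G : ℝ → ℝ, ∫ x, G x ∂ν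
      = ∫ x in Ioo (0:ℝ) 1, (DFdensity p x / Cp) * G x := by
    intro G
    rw [hν]
    have hd : AEMeasurable (fun x => (DFdensity p x / Cp).toNNReal)
        (volume.restrict (Ioo (0:ℝ) 1)) :=
      (((DF_density_contOn hc).aemeasurable measurableSet_Ioo).div_const Cp).real_toNNReal
    rw [show (fun x => ENNReal.ofReal (DFdensity p x / Cp))
        = fun x => ((DFdensity p x / Cp).toNNReal : ENNReal) from rfl]
    rw [integral_withDensity_eq_integral_smul₀ hd G]
    apply MeasureTheory.integral_congr_ae
    filter_upwards with x
    have hpos : 0 ≤ DFdensity p x / Cp := le_of_lt (div_pos (DF_density_pos x) hCppos)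
    rw [NNReal.smul_def, Real.coe_toNNReal _ hpos]
    rfl
  rw [hν_int, hν_int]
  -- notation
  set w : ℝ → ℝ := fun x => p x * DFdensity p x / x with hwdef
  set v : ℝ → ℝ := fun x => (1 - p x) * DFdensity p x / (1 - x) with hvdef
  have hwm : AEStronglyMeasurable w (volume.restrict (Ioo (0:ℝ) 1)) :=
    (DF_w_contOn hc).aestronglyMeasurable measurableSet_Ioo
  have hvm : AEStronglyMeasurable v (volume.restrict (Ioo (0:ℝ) 1)) :=
    (DF_v_contOn hc).aestronglyMeasurable measurableSet_Ioo
  have hwx : IntegrableOn (fun x => w x * x) (Ioo (0:ℝ) 1) := by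
    apply (DF_pf_integrable hα0 hH hM0 hp01 hp0 hq1).congr
    filter_upwards [self_mem_ae_restrict (measurableSet_Ioo : MeasurableSet (Ioo (0:ℝ) 1))]
      with x hx
    have hx0 : x ≠ 0 := ne_of_gt hx.1
    rw [hwdef]
    field_simp
  have hvx : IntegrableOn (fun x => v x * (1 - x)) (Ioo (0:ℝ) 1) := by
    apply (DF_qf_integrable hα0 hH hM0 hp01 hp0 hq1).congr
    filter_upwards [self_mem_ae_restrict (measurableSet_Ioo : MeasurableSet (Ioo (0:ℝ) 1))]
      with x hx
    have h1x : (1:ℝ) - x ≠ 0 := by intro hc'; apply hx.2.ne; linarith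
    rw [hvdef]
    field_simp
  obtain ⟨heq1, hint1, hWA⟩ := DF_fubini_lt (φ := φ) hwm hwx hφ hC
  obtain ⟨heq2, hint2, hVB⟩ := DF_fubini_gt (φ := φ) hvm hvx hφ hC
  -- rewrite the LHS integrand
  have hLHS : (∫ x in Ioo (0:ℝ) 1, (DFdensity p x / Cp) * DFQ p φ x)
      = ∫ x in Ioo (0:ℝ) 1,
        Cp⁻¹ * (w x * (∫ u in Ioo 0 x, φ u) + v x * (∫ u in Ioo x 1, φ u)) := by
    apply setIntegral_congr_fun measurableSet_Ioo
    intro x hx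
    simp only []
    have hx0 : x ≠ 0 := ne_of_gt hx.1
    have h1x : (1:ℝ) - x ≠ 0 := by intro hc'; apply hx.2.ne; linarith
    have e1 : (∫ t in (0:ℝ)..1, φ (t * x)) = x⁻¹ * ∫ u in Ioo 0 x, φ u := by
      rw [intervalIntegral.integral_comp_mul_right φ hx0]
      rw [zero_mul, one_mul, smul_eq_mul]
      rw [intervalIntegral.integral_of_le hx.1.le, integral_Ioc_eq_integral_Ioo]
    have e2 : (∫ t in (0:ℝ)..1, φ (t * x + 1 - t)) = (1 - x)⁻¹ * ∫ u in Ioo x 1, φ u := by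
      have ec : (∫ t in (0:ℝ)..1, φ (t * x + 1 - t))
          = ∫ t in (0:ℝ)..1, (fun s => φ (1 - s)) (t * (1 - x)) := by
        apply intervalIntegral.integral_congr
        intro t _
        simp only []
        congr 1
        ring
      rw [ec, intervalIntegral.integral_comp_mul_right (fun s => φ (1 - s)) h1x]
      rw [zero_mul, one_mul, smul_eq_mul]
      rw [intervalIntegral.integral_comp_sub_left φ 1]
      have h1 : (1:ℝ) - (1 - x) = x := by ring
      have h2 : (1:ℝ) - 0 = 1 := by ring
      rw [h1, h2, intervalIntegral.integral_of_le hx.2.le, integral_Ioc_eq_integral_Ioo]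
    rw [DFQ, e1, e2, hwdef, hvdef]
    field_simp
  rw [hLHS]
  rw [MeasureTheory.integral_const_mul]
  have hsplit : (∫ x in Ioo (0:ℝ) 1,
      (w x * (∫ u in Ioo 0 x, φ u) + v x * (∫ u in Ioo x 1, φ u)))
      = (∫ x in Ioo (0:ℝ) 1, w x * (∫ u in Ioo 0 x, φ u))
        + ∫ x in Ioo (0:ℝ) 1, v x * (∫ u in Ioo x 1, φ u) :=
    MeasureTheory.integral_add hWA hVB
  rw [hsplit, heq1, heq2]
  have hmerge : (∫ u in Ioo (0:ℝ) 1, (∫ x in Ioo u 1, w x) * φ u)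
      + (∫ u in Ioo (0:ℝ) 1, (∫ x in Ioo 0 u, v x) * φ u)
      = ∫ u in Ioo (0:ℝ) 1, ((∫ x in Ioo u 1, w x) * φ u + (∫ x in Ioo 0 u, v x) * φ u) :=
    (MeasureTheory.integral_add hint1 hint2).symm
  rw [hmerge, ← MeasureTheory.integral_const_mul]
  apply setIntegral_congr_fun measurableSet_Ioo
  intro u hu
  simp only []
  have hkey := DF_g_eq_density hα0 hH hM0 hp01 hp0 hq1 u hu
  rw [hwdef, hvdef] at *
  calc Cp⁻¹ * ((∫ x in Ioo u 1, p x * DFdensity p x / x) * φ u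
        + (∫ x in Ioo 0 u, (1 - p x) * DFdensity p x / (1 - x)) * φ u)
      = Cp⁻¹ * (((∫ x in Ioo u 1, p x * DFdensity p x / x)
        + (∫ x in Ioo 0 u, (1 - p x) * DFdensity p x / (1 - x))) * φ u) := by ring
    _ = Cp⁻¹ * (DFdensity p u * φ u) := by rw [hkey]
    _ = DFdensity p u / Cp * φ u := by ring
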